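/- Let c ∈ (0,1) and let P be the rotation by π/3 about the axis through the origin and v₁ = (1,-1,1), with c = 1/2. Then the pieces satisfy A₁ ∩ A_i = ∅ for all i ∈ {2,3,4}, while A_i ∩ A_j ≠ ∅ for all i, j ∈ {2,3,4}. In particular, the attractor A(1/2, P) is disconnected even though three of its four pieces pairwise intersect. -/

import Mathlib

/- STATEMENT 9: Let c = 1/2 and let P be the rotation by π/3 about the axis through the
origin and v₁ = (1,-1,1) (given below as an explicit matrix, computed via Rodrigues'
formula). Then A₁ ∩ A_i = ∅ for all i ∈ {2,3,4}, while A_i ∩ A_j ≠ ∅ for all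
i, j ∈ {2,3,4}; in particular the attractor A(1/2,P) is disconnected even though three of
its four pieces pairwise intersect. (Indices are 0-based: piece 0 is A₁, etc.) -/

noncomputable section
open Matrix

abbrev E3 := EuclideanSpace ℝ (Fin 3)

def vtx : Fin 4 → E3 :=
  ![!₂[1, -1, 1], !₂[-1, 1, 1], !₂[-1, -1, -1], !₂[1, 1, -1]]

def fmap (c : ℝ) (P : Matrix (Fin 3) (Fin 3) ℝ) (i : Fin 4) (x : E3) : E3 :=
  c • Matrix.toEuclideanLin P x + vtx i

def IsAttractor (c : ℝ) (P : Matrix (Fin 3) (Fin 3) ℝ) (A : Set E3) : Prop :=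
  A.Nonempty ∧ IsCompact A ∧ A = ⋃ i : Fin 4, fmap c P i '' A

/-- The rotation by π/3 about the line through 0 and (1,-1,1). -/
def Prot : Matrix (Fin 3) (Fin 3) ℝ :=
  !![2/3, -2/3, -1/3; 1/3, 2/3, -2/3; 2/3, 1/3, 2/3]

def Vz : Fin 4 → Fin 3 → ℤ :=
  ![![36, -36, 36], ![-36, 36, 36], ![-36, -36, -36], ![36, 36, -36]]
def Wz : Fin 4 → Fin 3 → ℤ :=
  ![![18, -18, 18], ![-30, -6, 6], ![6, -6, -30], ![6, 30, 6]]
def Uz : Fin 4 → Fin 3 → ℤ :=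
  ![![9, -9, 9], ![-9, -9, -9], ![9, 9, -9], ![-9, 9, 9]]

def qp0 : E3 := !₂[(-22:ℝ)/9, (-14:ℝ)/9, (-10:ℝ)/9]
def qp1 : E3 := !₂[(-22:ℝ)/9, (10:ℝ)/9, (14:ℝ)/9]
def qp2 : E3 := !₂[(-10:ℝ)/9, (22:ℝ)/9, (14:ℝ)/9]
def qp3 : E3 := !₂[(14:ℝ)/9, (22:ℝ)/9, (-10:ℝ)/9]
def qp4 : E3 := !₂[(14:ℝ)/9, (10:ℝ)/9, (-22:ℝ)/9]
def qp5 : E3 := !₂[(-10:ℝ)/9, (-14:ℝ)/9, (-22:ℝ)/9]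

lemma fmap_coord (c : ℝ) (i : Fin 4) (x : E3) (k : Fin 3) :
    fmap c Prot i x k =
      c * (Prot k 0 * x 0 + Prot k 1 * x 1 + Prot k 2 * x 2) + vtx i k := by
  simp [fmap, Matrix.toEuclideanLin_apply, Matrix.mulVec, dotProduct, Fin.sum_univ_three]

lemma zero_coord (k : Fin 3) : (0 : E3) k = 0 := rfl

lemma norm_sq (y : E3) : ‖y‖ = Real.sqrt (∑ k, y k ^ 2) := by
  rw [EuclideanSpace.norm_eq]
  congr 1; apply Finset.sum_congr rfl; intro k _
  rw [Real.norm_eq_abs, sq_abs]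

lemma Pnorm (x : E3) : ‖Matrix.toEuclideanLin Prot x‖ = ‖x‖ := by
  rw [norm_sq, norm_sq]
  congr 1
  simp [Matrix.toEuclideanLin_apply, Matrix.mulVec, dotProduct, Fin.sum_univ_three, Prot]
  ring

lemma fdist (i : Fin 4) (x y : E3) :
    dist (fmap (1/2) Prot i x) (fmap (1/2) Prot i y) = dist x y / 2 := by
  rw [dist_eq_norm, dist_eq_norm]
  have h : fmap (1/2) Prot i x - fmap (1/2) Prot i y
      = (1/2 : ℝ) • (Matrix.toEuclideanLin Prot (x - y)) := by
    simp [fmap, map_sub]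
    module
  rw [h, norm_smul, Pnorm]
  simp
  ring

lemma vtx_norm (i : Fin 4) : ‖vtx i‖ ≤ 2 := by
  have h2 : (2:ℝ) = Real.sqrt 4 := by
    rw [show (4:ℝ) = 2^2 by norm_num, Real.sqrt_sq (by norm_num : (0:ℝ) ≤ 2)]
  rw [norm_sq, h2]
  apply Real.sqrt_le_sqrt
  fin_cases i <;> simp [Fin.sum_univ_three, vtx] <;> norm_num

lemma normFm (i : Fin 4) (x : E3) : ‖fmap (1/2) Prot i x‖ ≤ ‖x‖/2 + 2 := by
  have h := norm_add_le ((1/2 : ℝ) • Matrix.toEuclideanLin Prot x) (vtx i)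
  rw [norm_smul, Pnorm] at h
  have h2 := vtx_norm i
  have h3 : ‖(1/2 : ℝ)‖ = 1/2 := by rw [Real.norm_eq_abs]; norm_num
  rw [h3] at h
  calc ‖fmap (1/2) Prot i x‖ = ‖(1/2 : ℝ) • Matrix.toEuclideanLin Prot x + vtx i‖ := rfl
  _ ≤ 1/2 * ‖x‖ + ‖vtx i‖ := h
  _ ≤ ‖x‖/2 + 2 := by linarith

lemma boundA (A : Set E3) (hA : IsAttractor (1/2) Prot A) : ∀ x ∈ A, ‖x‖ ≤ 4 := by
  obtain ⟨x₀, hx₀A, hmax⟩ := hA.2.1.exists_isMaxOn hA.1 continuous_norm.continuousOn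
  have h4 : ‖x₀‖ ≤ 4 := by
    have hx' := hx₀A
    rw [hA.2.2] at hx'
    simp only [Set.mem_iUnion, Set.mem_image] at hx'
    obtain ⟨i, y, hy, hxy⟩ := hx'
    have h1 : ‖x₀‖ ≤ ‖y‖/2 + 2 := by rw [← hxy]; exact normFm i y
    have h2 : ‖y‖ ≤ ‖x₀‖ := hmax hy
    linarith
  intro x hx
  exact (hmax hx).trans h4

lemma memA (A : Set E3) (hA : IsAttractor (1/2) Prot A) (i : Fin 4) (x : E3) (hx : x ∈ A) :
    fmap (1/2) Prot i x ∈ A := by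
  have h : fmap (1/2) Prot i x ∈ ⋃ j : Fin 4, fmap (1/2) Prot j '' A :=
    Set.mem_iUnion.2 ⟨i, ⟨x, hx, rfl⟩⟩
  rwa [← hA.2.2] at h

lemma cover (A : Set E3) (hA : IsAttractor (1/2) Prot A) :
    ∀ x ∈ A, ∃ a b : Fin 4, dist x (fmap (1/2) Prot a (fmap (1/2) Prot b 0)) ≤ 1 := by
  intro x hx
  rw [hA.2.2] at hx
  simp only [Set.mem_iUnion, Set.mem_image] at hx
  obtain ⟨a, y, hy, rfl⟩ := hx
  rw [hA.2.2] at hy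
  simp only [Set.mem_iUnion, Set.mem_image] at hy
  obtain ⟨b, z, hz, rfl⟩ := hy
  refine ⟨a, b, ?_⟩
  rw [fdist a, fdist b]
  have hz4 : dist z 0 ≤ 4 := by
    rw [dist_zero_right]; exact boundA A hA z hz
  linarith

set_option maxRecDepth 100000 in
set_option maxHeartbeats 4000000 in
lemma sep_check : ∀ i a b a' b' : Fin 4, i ≠ 0 →
    (1296 : ℤ) < ((Vz 0 0 + Wz a 0 + Uz b 0) - (Vz i 0 + Wz a' 0 + Uz b' 0))^2
      + ((Vz 0 1 + Wz a 1 + Uz b 1) - (Vz i 1 + Wz a' 1 + Uz b' 1))^2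
      + ((Vz 0 2 + Wz a 2 + Uz b 2) - (Vz i 2 + Wz a' 2 + Uz b' 2))^2 := by
  decide

lemma Vz_eval : ∀ i k, ((Vz i k : ℤ) : ℝ) = 36 * vtx i k := by
  intro i k
  fin_cases i <;> fin_cases k <;> norm_num [Vz, vtx]

lemma Wz_eval : ∀ a k, ((Wz a k : ℤ) : ℝ)
    = 18 * (Prot k 0 * vtx a 0 + Prot k 1 * vtx a 1 + Prot k 2 * vtx a 2) := by
  intro a k
  fin_cases a <;> fin_cases k <;> simp [Wz, vtx, Prot] <;> norm_num

lemma Uz_eval : ∀ b k, ((Uz b k : ℤ) : ℝ)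
    = 9 * (Prot k 0 * (Prot 0 0 * vtx b 0 + Prot 0 1 * vtx b 1 + Prot 0 2 * vtx b 2)
         + Prot k 1 * (Prot 1 0 * vtx b 0 + Prot 1 1 * vtx b 1 + Prot 1 2 * vtx b 2)
         + Prot k 2 * (Prot 2 0 * vtx b 0 + Prot 2 1 * vtx b 1 + Prot 2 2 * vtx b 2)) := by
  intro b k
  fin_cases b <;> fin_cases k <;> simp [Uz, vtx, Prot] <;> norm_num

lemma center_eval (i a b : Fin 4) :
    fmap (1/2) Prot i (fmap (1/2) Prot a (fmap (1/2) Prot b 0)) =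
      (WithLp.toLp 2 (fun k => (((Vz i k + Wz a k + Uz b k : ℤ)) : ℝ)/36) : E3) := by
  ext k
  simp only [fmap_coord, zero_coord, PiLp.toLp_apply]
  push_cast
  rw [Vz_eval, Wz_eval, Uz_eval]
  ring

set_option maxHeartbeats 1000000 in
lemma key (i a b a' b' : Fin 4) (hi : i ≠ 0) :
    1 < dist (fmap (1/2) Prot 0 (fmap (1/2) Prot a (fmap (1/2) Prot b 0)))
      (fmap (1/2) Prot i (fmap (1/2) Prot a' (fmap (1/2) Prot b' 0))) := by
  rw [center_eval 0 a b, center_eval i a' b', EuclideanSpace.dist_eq]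
  have h := sep_check i a b a' b' hi
  have h' : (1296 : ℝ) < (((Vz 0 0 + Wz a 0 + Uz b 0 : ℤ) : ℝ) - ((Vz i 0 + Wz a' 0 + Uz b' 0 : ℤ) : ℝ))^2
      + (((Vz 0 1 + Wz a 1 + Uz b 1 : ℤ) : ℝ) - ((Vz i 1 + Wz a' 1 + Uz b' 1 : ℤ) : ℝ))^2
      + (((Vz 0 2 + Wz a 2 + Uz b 2 : ℤ) : ℝ) - ((Vz i 2 + Wz a' 2 + Uz b' 2 : ℤ) : ℝ))^2 := by
    exact_mod_cast h
  refine (Real.lt_sqrt (by norm_num)).2 ?_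
  simp only [Fin.sum_univ_three, Real.dist_eq, sq_abs, one_pow]
  have e : ∀ u1 u2 u3 w1 w2 w3 : ℝ, (u1/36 - w1/36)^2 + (u2/36 - w2/36)^2 + (u3/36 - w3/36)^2
      = ((u1-w1)^2 + ((u2-w2)^2 + ((u3-w3)^2 + 0)))/1296 := by
    intro u1 u2 u3 w1 w2 w3; ring
  rw [e, lt_div_iff₀ (by norm_num : (0:ℝ) < 1296)]
  push_cast at h' ⊢
  linarith [h']

lemma disj (A : Set E3) (hA : IsAttractor (1/2) Prot A) :
    ∀ i : Fin 4, i ≠ 0 → fmap (1/2) Prot 0 '' A ∩ fmap (1/2) Prot i '' A = ∅ := by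
  intro i hi
  rw [Set.eq_empty_iff_forall_notMem]
  rintro z ⟨⟨x, hx, hzx⟩, ⟨y, hy, hzy⟩⟩
  obtain ⟨a, b, hab⟩ := cover A hA x hx
  obtain ⟨a', b', hab'⟩ := cover A hA y hy
  have hz : fmap (1/2) Prot 0 x = fmap (1/2) Prot i y := by rw [hzx, ← hzy]
  have h1 : dist (fmap (1/2) Prot 0 (fmap (1/2) Prot a (fmap (1/2) Prot b 0)))
      (fmap (1/2) Prot 0 x) ≤ 1/2 := by
    rw [fdist, dist_comm]; linarith
  have h2 : dist (fmap (1/2) Prot 0 x)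
      (fmap (1/2) Prot i (fmap (1/2) Prot a' (fmap (1/2) Prot b' 0))) ≤ 1/2 := by
    rw [hz, fdist]; linarith
  have hk := key i a b a' b' hi
  have htri := dist_triangle (fmap (1/2) Prot 0 (fmap (1/2) Prot a (fmap (1/2) Prot b 0)))
      (fmap (1/2) Prot 0 x)
      (fmap (1/2) Prot i (fmap (1/2) Prot a' (fmap (1/2) Prot b' 0)))
  linarith

lemma qrel0 : fmap (1/2) Prot 2 qp1 = qp0 := by
  ext k; simp only [fmap_coord]; fin_cases k <;> simp [PiLp.toLp_apply, Prot, vtx, qp0, qp1] <;> norm_num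
lemma qrel1 : fmap (1/2) Prot 1 qp2 = qp1 := by
  ext k; simp only [fmap_coord]; fin_cases k <;> simp [PiLp.toLp_apply, Prot, vtx, qp1, qp2] <;> norm_num
lemma qrel2 : fmap (1/2) Prot 1 qp3 = qp2 := by
  ext k; simp only [fmap_coord]; fin_cases k <;> simp [PiLp.toLp_apply, Prot, vtx, qp2, qp3] <;> norm_num
lemma qrel3 : fmap (1/2) Prot 3 qp4 = qp3 := by
  ext k; simp only [fmap_coord]; fin_cases k <;> simp [PiLp.toLp_apply, Prot, vtx, qp3, qp4] <;> norm_num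
lemma qrel4 : fmap (1/2) Prot 3 qp5 = qp4 := by
  ext k; simp only [fmap_coord]; fin_cases k <;> simp [PiLp.toLp_apply, Prot, vtx, qp4, qp5] <;> norm_num
lemma qrel5 : fmap (1/2) Prot 2 qp0 = qp5 := by
  ext k; simp only [fmap_coord]; fin_cases k <;> simp [PiLp.toLp_apply, Prot, vtx, qp5, qp0] <;> norm_num

lemma wit12 : fmap (1/2) Prot 1 qp0 = fmap (1/2) Prot 2 qp3 := by
  ext k; simp only [fmap_coord]; fin_cases k <;> simp [PiLp.toLp_apply, Prot, vtx, qp0, qp3] <;> norm_num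
lemma wit13 : fmap (1/2) Prot 1 qp5 = fmap (1/2) Prot 3 qp2 := by
  ext k; simp only [fmap_coord]; fin_cases k <;> simp [PiLp.toLp_apply, Prot, vtx, qp5, qp2] <;> norm_num
lemma wit23 : fmap (1/2) Prot 2 qp4 = fmap (1/2) Prot 3 qp1 := by
  ext k; simp only [fmap_coord]; fin_cases k <;> simp [PiLp.toLp_apply, Prot, vtx, qp4, qp1] <;> norm_num

lemma qp0_mem (A : Set E3) (hA : IsAttractor (1/2) Prot A) : qp0 ∈ A := by
  obtain ⟨a, ha⟩ := hA.1
  set g : E3 → E3 := fun x => fmap (1/2) Prot 2 (fmap (1/2) Prot 1 (fmap (1/2) Prot 1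
      (fmap (1/2) Prot 3 (fmap (1/2) Prot 3 (fmap (1/2) Prot 2 x))))) with hgdef
  have hg : g qp0 = qp0 := by
    rw [hgdef]; simp only
    rw [qrel5, qrel4, qrel3, qrel2, qrel1, qrel0]
  have hgd : ∀ x y : E3, dist (g x) (g y) = dist x y / 64 := by
    intro x y
    rw [hgdef]; simp only
    rw [fdist, fdist, fdist, fdist, fdist, fdist]
    ring
  have hgA : ∀ x, x ∈ A → g x ∈ A := by
    intro x hx
    rw [hgdef]; simp only
    exact memA A hA 2 _ (memA A hA 1 _ (memA A hA 1 _ (memA A hA 3 _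
      (memA A hA 3 _ (memA A hA 2 _ hx)))))
  have hiter : ∀ n : ℕ, g^[n] a ∈ A := by
    intro n
    induction n with
    | zero => simpa using ha
    | succ n ih => rw [Function.iterate_succ_apply']; exact hgA _ ih
  have hdist : ∀ n : ℕ, dist (g^[n] a) qp0 ≤ dist a qp0 * (1/64)^n := by
    intro n
    induction n with
    | zero => simp
    | succ n ih =>
      calc dist (g^[n+1] a) qp0 = dist (g (g^[n] a)) (g qp0) := by
            rw [Function.iterate_succ_apply', hg]
      _ = dist (g^[n] a) qp0 / 64 := hgd _ _
      _ ≤ (dist a qp0 * (1/64)^n) / 64 := by linarith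
      _ = dist a qp0 * (1/64)^(n+1) := by rw [pow_succ]; ring
  have htend : Filter.Tendsto (fun n => g^[n] a) Filter.atTop (nhds qp0) := by
    refine tendsto_iff_dist_tendsto_zero.2 (squeeze_zero (fun n => dist_nonneg) hdist ?_)
    have := (tendsto_pow_atTop_nhds_zero_of_lt_one (by norm_num : (0:ℝ) ≤ 1/64)
      (by norm_num : (1:ℝ)/64 < 1)).const_mul (dist a qp0)
    simpa using this
  exact hA.2.1.isClosed.mem_of_tendsto htend (Filter.Eventually.of_forall hiter)

lemma interWit (A : Set E3) {i j : Fin 4} {x y : E3} (hx : x ∈ A) (hy : y ∈ A)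
    (h : fmap (1/2) Prot i x = fmap (1/2) Prot j y) :
    (fmap (1/2) Prot i '' A ∩ fmap (1/2) Prot j '' A).Nonempty :=
  ⟨fmap (1/2) Prot i x, ⟨x, hx, rfl⟩, ⟨y, hy, h.symm⟩⟩

theorem pieces_intersections_example (A : Set E3) (hA : IsAttractor (1 / 2) Prot A) :
    (∀ i : Fin 4, i ≠ 0 → fmap (1 / 2) Prot 0 '' A ∩ fmap (1 / 2) Prot i '' A = ∅) ∧
    (∀ i j : Fin 4, i ≠ 0 → j ≠ 0 →
      (fmap (1 / 2) Prot i '' A ∩ fmap (1 / 2) Prot j '' A).Nonempty) ∧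
    ¬ IsConnected A := by
  have contF : ∀ i : Fin 4, Continuous (fmap (1/2) Prot i) := by
    intro i
    show Continuous fun x => (1/2 : ℝ) • Matrix.toEuclideanLin Prot x + vtx i
    exact (((Matrix.toEuclideanLin Prot).continuous_of_finiteDimensional).const_smul (1/2 : ℝ)).add
      continuous_const
  obtain ⟨a, ha⟩ := hA.1
  have m0 := qp0_mem A hA
  have m5 : qp5 ∈ A := qrel5 ▸ memA A hA 2 qp0 m0
  have m4 : qp4 ∈ A := qrel4 ▸ memA A hA 3 qp5 m5
  have m3 : qp3 ∈ A := qrel3 ▸ memA A hA 3 qp4 m4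
  have m2 : qp2 ∈ A := qrel2 ▸ memA A hA 1 qp3 m3
  have m1 : qp1 ∈ A := qrel1 ▸ memA A hA 1 qp2 m2
  refine ⟨disj A hA, ?_, ?_⟩
  · intro i j hi hj
    fin_cases i
    · exact absurd rfl hi
    · fin_cases j
      · exact absurd rfl hj
      · exact interWit A ha ha rfl
      · exact interWit A m0 m3 wit12
      · exact interWit A m5 m2 wit13
    · fin_cases j
      · exact absurd rfl hj
      · exact interWit A m3 m0 wit12.symm
      · exact interWit A ha ha rfl
      · exact interWit A m4 m1 wit23
    · fin_cases j
      · exact absurd rfl hj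
      · exact interWit A m2 m5 wit13.symm
      · exact interWit A m1 m4 wit23.symm
      · exact interWit A ha ha rfl
  · rintro ⟨-, hconn⟩
    rw [isPreconnected_closed_iff] at hconn
    have hcl0 : IsClosed (fmap (1/2) Prot 0 '' A) := (hA.2.1.image (contF 0)).isClosed
    have hclR : IsClosed (fmap (1/2) Prot 1 '' A ∪ fmap (1/2) Prot 2 '' A
        ∪ fmap (1/2) Prot 3 '' A) :=
      (((hA.2.1.image (contF 1)).union (hA.2.1.image (contF 2))).union
        (hA.2.1.image (contF 3))).isClosed
    have hsub : A ⊆ fmap (1/2) Prot 0 '' A ∪ (fmap (1/2) Prot 1 '' A ∪ fmap (1/2) Prot 2 '' A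
        ∪ fmap (1/2) Prot 3 '' A) := by
      intro x hx
      rw [hA.2.2] at hx
      simp only [Set.mem_iUnion] at hx
      obtain ⟨i, hxi⟩ := hx
      fin_cases i
      · exact Set.mem_union_left _ hxi
      · exact Set.mem_union_right _ (Set.mem_union_left _ (Set.mem_union_left _ hxi))
      · exact Set.mem_union_right _ (Set.mem_union_left _ (Set.mem_union_right _ hxi))
      · exact Set.mem_union_right _ (Set.mem_union_right _ hxi)
    have hne0 : (A ∩ fmap (1/2) Prot 0 '' A).Nonempty :=
      ⟨fmap (1/2) Prot 0 a, memA A hA 0 a ha, ⟨a, ha, rfl⟩⟩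
    have hneR : (A ∩ (fmap (1/2) Prot 1 '' A ∪ fmap (1/2) Prot 2 '' A
        ∪ fmap (1/2) Prot 3 '' A)).Nonempty :=
      ⟨fmap (1/2) Prot 1 a, memA A hA 1 a ha,
        Set.mem_union_left _ (Set.mem_union_left _ ⟨a, ha, rfl⟩)⟩
    obtain ⟨z, hzA, hz0, hzR⟩ := hconn _ _ hcl0 hclR hsub hne0 hneR
    rcases hzR with (hz1 | hz2) | hz3
    · exact Set.eq_empty_iff_forall_notMem.1 (disj A hA 1 (by decide)) z ⟨hz0, hz1⟩
    · exact Set.eq_empty_iff_forall_notMem.1 (disj A hA 2 (by decide)) z ⟨hz0, hz2⟩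
    · exact Set.eq_empty_iff_forall_notMem.1 (disj A hA 3 (by decide)) z ⟨hz0, hz3⟩
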